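/- Let q₁, q₂, q₃ be (not necessarily distinct) affine lines in ℝ², not all three parallel. Then exactly one of the following two statements holds: (1) q₁ ∩ q₂ ∩ q₃ ≠ ∅ and every two of the three lines form an angle of π/3 (the acute angle between the directions of any two of the lines equals π/3); (2) the set of triples (A, B, C) ∈ q₁ × q₂ × q₃ with dist(A,B) = dist(B,C) = dist(C,A) = 1 is finite. -/

import Mathlib

open scoped RealInnerProductSpace

/-- `l` is an (affine) line in the plane: a one-dimensional affine subspace. -/
def IsLine (l : AffineSubspace ℝ (EuclideanSpace ℝ (Fin 2))) : Prop :=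
  (l : Set (EuclideanSpace ℝ (Fin 2))).Nonempty ∧ Module.finrank ℝ l.direction = 1

/-- The acute angle formed by the two lines `l₁` and `l₂` equals `π/3`,
i.e. the cosine of the angle between any two nonzero direction vectors is `± 1/2`. -/
def AngleSixty (l₁ l₂ : AffineSubspace ℝ (EuclideanSpace ℝ (Fin 2))) : Prop :=
  ∀ u ∈ l₁.direction, ∀ v ∈ l₂.direction, u ≠ 0 → v ≠ 0 →
    |⟪u, v⟫| = ‖u‖ * ‖v‖ / 2

open Complex ComplexConjugate

namespace Stmt7Aux
noncomputable section




/-- cross product of two plane vectors -/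
def cross (z w : ℂ) : ℝ := z.re * w.im - z.im * w.re

/-- a primitive cube root of unity -/
def om : ℂ := -1/2 + (Real.sqrt 3 / 2) * Complex.I

lemma om_re : om.re = -(1/2) := by simp [om]; norm_num

lemma om_im : om.im = Real.sqrt 3 / 2 := by simp [om]

lemma sq3 : Real.sqrt 3 ^ 2 = 3 := Real.sq_sqrt (by norm_num)

lemma om_im_ne : om.im ≠ 0 := by
  rw [om_im]
  positivity

lemma om_rel : om ^ 2 + om + 1 = 0 := by
  apply Complex.ext <;>
    simp [pow_two, Complex.mul_re, Complex.mul_im, om_re, om_im] <;> nlinarith [sq3]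

lemma om_normSq : normSq om = 1 := by
  simp [normSq_apply, om_re, om_im]; nlinarith [sq3]

lemma om_abs : ‖om‖ = 1 := by
  rw [Complex.norm_def, om_normSq, Real.sqrt_one]

lemma om_sq : om ^ 2 = conj om := by
  have h := om_rel
  apply Complex.ext
  · have : (om ^ 2).re = -1 - om.re := by
      have := congrArg Complex.re h; simp at this; linarith
    rw [this, conj_re, om_re]; norm_num
  · have : (om ^ 2).im = -om.im := by
      have := congrArg Complex.im h; simp at this; linarith
    rw [this, conj_im]

lemma omb_rel : (conj om) ^ 2 + conj om + 1 = 0 := by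
  have := congrArg conj om_rel
  simpa [map_pow] using this

lemma omb_abs : ‖(conj om)‖ = 1 := by rw [Complex.norm_conj, om_abs]

lemma omb_sq : (conj om) ^ 2 = om := by
  have := congrArg conj om_sq
  simpa [map_pow] using this

lemma om_mul_omb : om * conj om = 1 := by
  rw [Complex.mul_conj, om_normSq]; norm_num





lemma cross_exists {z w : ℂ} (hz : z ≠ 0) (h : cross z w = 0) : ∃ r : ℝ, w = (r : ℂ) * z := by
  unfold cross at h
  by_cases hre : z.re = 0
  · have him : z.im ≠ 0 := fun h2 => hz (Complex.ext hre h2)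
    have hwre : w.re = 0 := by
      have h3 : z.im * w.re = 0 := by rw [hre] at h; linarith
      rcases mul_eq_zero.mp h3 with h' | h'
      · exact absurd h' him
      · exact h'
    refine ⟨w.im / z.im, Complex.ext ?_ ?_⟩
    · simp [Complex.mul_re, hre, hwre]
    · simp [Complex.mul_im, hre]
      field_simp
  · refine ⟨w.re / z.re, ?_⟩
    apply Complex.ext <;> simp [Complex.mul_re, Complex.mul_im]
    · field_simp
    · field_simp; nlinarith [h]

lemma cross_real_mul (r : ℝ) (z : ℂ) : cross z ((r : ℂ) * z) = 0 := by
  simp [cross, Complex.mul_re, Complex.mul_im]; ring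

def csol1 (α β w : ℂ) : ℝ := (w.re * β.im - w.im * β.re) / cross α β
def csol2 (α β w : ℂ) : ℝ := (α.re * w.im - α.im * w.re) / cross α β

lemma csol_spec {α β : ℂ} (hD : cross α β ≠ 0) (w : ℂ) :
    (csol1 α β w : ℂ) * α + (csol2 α β w : ℂ) * β = w := by
  apply Complex.ext <;>
    simp [csol1, csol2, Complex.mul_re, Complex.mul_im] <;>
    · simp only [cross] at hD ⊢
      have hD' : β.im * α.re - β.re * α.im ≠ 0 := by contrapose! hD; linarith
      field_simp
      ring

lemma csol_unique {α β : ℂ} (hD : cross α β ≠ 0) {s t : ℝ} {w : ℂ}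
    (h : (s : ℂ) * α + (t : ℂ) * β = w) : s = csol1 α β w ∧ t = csol2 α β w := by
  have h1 := congrArg Complex.re h
  have h2 := congrArg Complex.im h
  simp [Complex.mul_re, Complex.mul_im] at h1 h2
  unfold cross at hD
  constructor
  · unfold csol1 cross
    rw [eq_div_iff hD]
    linear_combination β.im * h1 - β.re * h2
  · unfold csol2 cross
    field_simp
    linear_combination α.re * h2 - α.im * h1

lemma csol1_linear (α β w₁ w₂ : ℂ) (r : ℝ) :
    csol1 α β (w₁ + (r : ℂ) * w₂) = csol1 α β w₁ + r * csol1 α β w₂ := by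
  simp [csol1, Complex.mul_re, Complex.mul_im]; ring

lemma csol2_linear (α β w₁ w₂ : ℂ) (r : ℝ) :
    csol2 α β (w₁ + (r : ℂ) * w₂) = csol2 α β w₁ + r * csol2 α β w₂ := by
  simp [csol2, Complex.mul_re, Complex.mul_im]; ring

lemma quad_finite {m n : ℂ} (hn : n ≠ 0) :
    {u : ℝ | ‖(m + (u : ℂ) * n)‖ = 1}.Finite := by
  classical
  set p : Polynomial ℝ := Polynomial.C (normSq n) * Polynomial.X ^ 2 +
    Polynomial.C (2 * (m.re * n.re + m.im * n.im)) * Polynomial.X +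
    Polynomial.C (normSq m - 1) with hp
  have hp0 : p ≠ 0 := by
    intro h
    have := congrArg (fun q => Polynomial.coeff q 2) h
    simp [hp, Polynomial.coeff_add, Polynomial.coeff_C_mul, Polynomial.coeff_X_pow,
      Polynomial.coeff_C, Polynomial.coeff_X, Polynomial.coeff_one] at this
    exact hn this
  refine (Polynomial.finite_setOf_isRoot hp0).subset ?_
  intro u hu
  have habs : ‖(m + (u : ℂ) * n)‖ = 1 := hu
  have h1 : normSq (m + (u : ℂ) * n) = 1 := by
    rw [← Complex.sq_norm, habs, one_pow]
  simp only [Set.mem_setOf_eq, Polynomial.IsRoot, hp, Polynomial.eval_add,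
    Polynomial.eval_mul, Polynomial.eval_pow, Polynomial.eval_C, Polynomial.eval_X]
  simp only [normSq_apply]
  simp [normSq_apply, Complex.mul_re, Complex.mul_im] at h1
  linear_combination h1

def circ (r : ℝ) : ℂ := ⟨(1 - r ^ 2) / (1 + r ^ 2), 2 * r / (1 + r ^ 2)⟩

lemma circ_re (r : ℝ) : (circ r).re = (1 - r ^ 2) / (1 + r ^ 2) := rfl
lemma circ_im (r : ℝ) : (circ r).im = 2 * r / (1 + r ^ 2) := rfl

lemma circ_abs (r : ℝ) : ‖(circ r)‖ = 1 := by
  have h : (1 : ℝ) + r ^ 2 ≠ 0 := by positivity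
  rw [Complex.norm_def]
  have : normSq (circ r) = 1 := by
    rw [normSq_apply, circ_re, circ_im]
    field_simp
    ring
  rw [this, Real.sqrt_one]

lemma circ_inj : Function.Injective circ := by
  intro r s h
  have h1 : (1 : ℝ) + r ^ 2 ≠ 0 := by positivity
  have h2 : (1 : ℝ) + s ^ 2 ≠ 0 := by positivity
  have hre := congrArg Complex.re h
  have him := congrArg Complex.im h
  rw [circ_re, circ_re] at hre
  rw [circ_im, circ_im] at him
  have e1 : (1 - r ^ 2) * (1 + s ^ 2) = (1 - s ^ 2) * (1 + r ^ 2) := by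
    field_simp at hre; linarith [hre]
  have e2 : 2 * r * (1 + s ^ 2) = 2 * s * (1 + r ^ 2) := by
    field_simp at him; linarith [him]
  nlinarith [e1, e2, sq_nonneg (r - s), sq_nonneg (r + s)]



/-- angle condition: the acute angle between directions z and w is 60 degrees -/
def Ang (z w : ℂ) : Prop := |z.re * w.re + z.im * w.im| = ‖z‖ * ‖w‖ / 2

lemma reconj (z w : ℂ) : (conj z * w).re = z.re * w.re + z.im * w.im := by
  simp [Complex.mul_re]

lemma imconj (z w : ℂ) : (conj z * w).im = cross z w := by
  simp [Complex.mul_im, cross]; ring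

lemma mu_rel {μ : ℂ} (h : μ = om ∨ μ = conj om) : μ ^ 2 + μ + 1 = 0 := by
  rcases h with h | h <;> rw [h]
  · exact om_rel
  · exact omb_rel

lemma mu_abs {μ : ℂ} (h : μ = om ∨ μ = conj om) : ‖μ‖ = 1 := by
  rcases h with h | h <;> rw [h]
  · exact om_abs
  · exact omb_abs

lemma mu_ne {μ : ℂ} (h : μ = om ∨ μ = conj om) : μ ≠ 0 := by
  intro h0
  have := mu_abs h
  rw [h0] at this
  simp at this

lemma mu_im_ne {μ : ℂ} (h : μ = om ∨ μ = conj om) : μ.im ≠ 0 := by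
  rcases h with h | h <;> rw [h]
  · exact om_im_ne
  · simp [conj_im]; exact om_im_ne

lemma mu_re {μ : ℂ} (h : μ = om ∨ μ = conj om) : μ.re = -(1/2) := by
  rcases h with h | h <;> rw [h] <;> simp [conj_re, om_re]

lemma mu_sq {μ : ℂ} (h : μ = om ∨ μ = conj om) : μ ^ 2 = conj om ∨ μ ^ 2 = om := by
  rcases h with h | h <;> rw [h]
  · exact Or.inl om_sq
  · exact Or.inr omb_sq

lemma mu_sq_mem {μ : ℂ} (h : μ = om ∨ μ = conj om) : μ ^ 2 = om ∨ μ ^ 2 = conj om :=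
  (mu_sq h).elim (fun h' => Or.inr h') (fun h' => Or.inl h')

lemma mu_conj_mul {μ : ℂ} (h : μ = om ∨ μ = conj om) : conj μ * μ = 1 := by
  have h1 := mu_abs h
  have : conj μ * μ = (normSq μ : ℂ) := by
    rw [mul_comm, Complex.mul_conj]
  rw [this, Complex.normSq_eq_norm_sq, h1]
  norm_num

/-- from `a + μ b + μ² c = 0` and one side length, all sides have length 1. -/
lemma equilateral_of {μ a b c : ℂ} (hrel : μ ^ 2 + μ + 1 = 0) (habs : ‖μ‖ = 1)
    (h : a + μ * b + μ ^ 2 * c = 0) (h1 : dist a b = 1) :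
    dist b c = 1 ∧ dist c a = 1 := by
  have hcub : μ ^ 3 = 1 := by linear_combination (μ - 1) * hrel
  have e1 : a - b = μ ^ 2 * (b - c) := by linear_combination h - b * hrel
  have h' : b + μ * c + μ ^ 2 * a = 0 := by
    linear_combination μ ^ 2 * h - (b + μ * c) * (μ - 1) * hrel
  have e2 : b - c = μ ^ 2 * (c - a) := by linear_combination h' - c * hrel
  have habs2 : ‖(μ ^ 2)‖ = 1 := by rw [norm_pow, habs, one_pow]
  rw [Complex.dist_eq] at h1
  have hbc : ‖(b - c)‖ = 1 := by
    have : ‖(a - b)‖ = ‖(b - c)‖ := by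
      rw [e1, norm_mul, habs2, one_mul]
    rw [← this, h1]
  have hca : ‖(c - a)‖ = 1 := by
    have : ‖(b - c)‖ = ‖(c - a)‖ := by
      rw [e2, norm_mul, habs2, one_mul]
    rw [← this, hbc]
  exact ⟨by rw [Complex.dist_eq, hbc], by rw [Complex.dist_eq, hca]⟩
/-- the classification of equilateral triangles with unit sides -/
lemma equilateral_classify {a b c : ℂ} (h1 : dist a b = 1) (h2 : dist b c = 1)
    (h3 : dist c a = 1) :
    a + om * b + om ^ 2 * c = 0 ∨ a + conj om * b + (conj om) ^ 2 * c = 0 := by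
  rw [Complex.dist_eq] at h1 h2 h3
  set z := a - b with hz
  set w := b - c with hw
  have hzw : ‖(z + w)‖ = 1 := by
    have : z + w = a - c := by rw [hz, hw]; ring
    rw [this, norm_sub_rev]
    exact h3
  have hnz : normSq z = 1 := by rw [← Complex.sq_norm, h1, one_pow]
  have hnw : normSq w = 1 := by rw [← Complex.sq_norm, h2, one_pow]
  have hnzw : normSq (z + w) = 1 := by rw [← Complex.sq_norm, hzw, one_pow]
  set ρ := z * conj w with hρ
  have hρre : ρ.re = -(1/2) := by
    simp only [hρ, Complex.mul_re, Complex.conj_re, Complex.conj_im] at *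
    simp [normSq_apply] at hnz hnw hnzw
    nlinarith [hnz, hnw, hnzw]
  have hρabs : ‖ρ‖ = 1 := by
    rw [hρ, norm_mul, Complex.norm_conj, h1, h2, one_mul]
  -- classification of ρ
  have hρim : ρ.im = Real.sqrt 3 / 2 ∨ ρ.im = -(Real.sqrt 3 / 2) := by
    have hnρ : normSq ρ = 1 := by rw [← Complex.sq_norm, hρabs, one_pow]
    rw [normSq_apply, hρre] at hnρ
    have hfac : (ρ.im - Real.sqrt 3 / 2) * (ρ.im + Real.sqrt 3 / 2) = 0 := by
      nlinarith [sq3, hnρ]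
    rcases mul_eq_zero.mp hfac with h | h
    · left; linarith
    · right; linarith
  have hρval : ρ = om ∨ ρ = conj om := by
    rcases hρim with h | h
    · left; exact Complex.ext (by rw [hρre, om_re]) (by rw [h, om_im])
    · right; exact Complex.ext (by rw [hρre, conj_re, om_re]) (by rw [h, conj_im, om_im])
  have hzρw : z = ρ * w := by
    have hcw : conj w * w = 1 := by
      rw [mul_comm, Complex.mul_conj, hnw]; norm_num
    calc z = z * (conj w * w) := by rw [hcw, mul_one]
    _ = ρ * w := by rw [hρ]; ring
  rcases hρval with h | h
  · -- ρ = om : other orientation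
    right
    have he : a - b = om * (b - c) := by rw [← hz, ← hw, hzρw, h]
    have h5 : a + om ^ 2 * b + om * c = 0 := by
      linear_combination he + b * om_rel
    rw [omb_sq]
    calc a + conj om * b + om * c = a + om ^ 2 * b + om * c := by rw [om_sq]
    _ = 0 := h5
  · left
    have he : a - b = om ^ 2 * (b - c) := by rw [← hz, ← hw, hzρw, h, om_sq]
    linear_combination he + b * om_rel
lemma ang_of_rot {α β ζ : ℂ} (hα : α ≠ 0) (hζre : |ζ.re| = 1 / 2)
    (hζabs : ‖ζ‖ = 1) (p : ℝ) (h : β = (p : ℂ) * (ζ * α)) : Ang α β := by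
  unfold Ang
  rw [← reconj]
  have hcb : conj α * β = (p : ℂ) * ζ * ((normSq α : ℝ) : ℂ) := by
    calc conj α * β = (p : ℂ) * ζ * (α * conj α) := by rw [h]; ring
    _ = (p : ℂ) * ζ * ((normSq α : ℝ) : ℂ) := by rw [Complex.mul_conj]
  have habsβ : ‖β‖ = |p| * ‖α‖ := by
    rw [h, norm_mul, norm_mul, Complex.norm_real, Real.norm_eq_abs, hζabs, one_mul]
  have hre : ((p : ℂ) * ζ * ((normSq α : ℝ) : ℂ)).re = p * ζ.re * normSq α := by
    simp [Complex.mul_re]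
  rw [hcb, hre, habsβ, abs_mul, abs_mul, hζre, _root_.abs_of_nonneg (normSq_nonneg α)]
  rw [show ‖α‖ * (|p| * ‖α‖) = |p| * (‖α‖ * ‖α‖) by ring,
    ← pow_two, Complex.sq_norm]
  ring

lemma ang_structure {α β : ℂ} (hα : α ≠ 0) (hβ : β ≠ 0) (h : Ang α β) :
    ∃ e : ℝ, e ≠ 0 ∧ (β = (e : ℂ) * (om * α) ∨ β = (e : ℂ) * (conj om * α)) := by
  set ζ := conj α * β with hζ
  set r := ‖ζ‖ with hr
  have hζ0 : ζ ≠ 0 := mul_ne_zero (by simpa using hα) hβ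
  have hr0 : r > 0 := norm_pos_iff.mpr hζ0
  have hre : |ζ.re| = r / 2 := by
    unfold Ang at h
    rw [← reconj] at h
    rw [h, hr, hζ, norm_mul, Complex.norm_conj]
  have hnζ : ζ.re ^ 2 + ζ.im ^ 2 = r ^ 2 := by
    rw [hr, Complex.sq_norm, normSq_apply]; ring
  have hre2 : ζ.re ^ 2 = r ^ 2 / 4 := by
    have h2 := congrArg (fun x : ℝ => x ^ 2) hre
    simp only [_root_.sq_abs] at h2
    rw [h2]; ring
  have him : ζ.im = Real.sqrt 3 / 2 * r ∨ ζ.im = -(Real.sqrt 3 / 2 * r) := by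
    have hfac : (ζ.im - Real.sqrt 3 / 2 * r) * (ζ.im + Real.sqrt 3 / 2 * r) = 0 := by
      nlinarith [sq3, hnζ, hre2]
    rcases mul_eq_zero.mp hfac with h' | h'
    · left; linarith
    · right; linarith
  have hrecase : ζ.re = -(r / 2) ∨ ζ.re = r / 2 := by
    rcases abs_eq (by positivity : (0:ℝ) ≤ r / 2) |>.mp hre with h' | h'
    · right; exact h'
    · left; rw [h']
  have hζval : ∃ e : ℝ, e ≠ 0 ∧ (ζ = (e : ℂ) * om ∨ ζ = (e : ℂ) * conj om) := by
    rcases hrecase with h1 | h1 <;> rcases him with h2 | h2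
    · exact ⟨r, ne_of_gt hr0, Or.inl (Complex.ext
        (by simp [Complex.mul_re, om_re, om_im, h1]; ring)
        (by simp [Complex.mul_im, om_re, om_im, h2]; ring))⟩
    · exact ⟨r, ne_of_gt hr0, Or.inr (Complex.ext
        (by simp [Complex.mul_re, om_re, om_im, h1]; ring)
        (by simp [Complex.mul_im, om_re, om_im, h2]; ring))⟩
    · exact ⟨-r, by simp [ne_of_gt hr0], Or.inr (Complex.ext
        (by simp [Complex.mul_re, om_re, om_im, h1]; ring)
        (by simp [Complex.mul_im, om_re, om_im, h2]; ring))⟩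
    · exact ⟨-r, by simp [ne_of_gt hr0], Or.inl (Complex.ext
        (by simp [Complex.mul_re, om_re, om_im, h1]; ring)
        (by simp [Complex.mul_im, om_re, om_im, h2]; ring))⟩
  obtain ⟨e, he, hcase⟩ := hζval
  have hn0 : (normSq α : ℂ) ≠ 0 := by
    simpa using normSq_eq_zero.not.mpr hα
  have hkey : ((normSq α : ℝ) : ℂ) * β = α * ζ := by
    rw [hζ]
    calc ((normSq α : ℝ) : ℂ) * β = (α * conj α) * β := by rw [Complex.mul_conj]
    _ = α * (conj α * β) := by ring
  have hns : normSq α ≠ 0 := normSq_eq_zero.not.mpr hα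
  refine ⟨e / normSq α, div_ne_zero he hns, ?_⟩
  rcases hcase with hc | hc
  · left
    apply mul_left_cancel₀ hn0
    rw [hkey, hc]
    push_cast
    field_simp
  · right
    apply mul_left_cancel₀ hn0
    rw [hkey, hc]
    push_cast
    field_simp
lemma normSq_mu {μ : ℂ} (hμ : μ = om ∨ μ = conj om) : normSq μ = 1 := by
  have := mu_abs hμ
  rw [← Complex.sq_norm, this, one_pow]

lemma ang_same_rot {α β γ ρ : ℂ} (hα : α ≠ 0) (hρ : ρ = om ∨ ρ = conj om)
    {e f : ℝ} (he : e ≠ 0) (hf : f ≠ 0)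
    (hb : β = (e : ℂ) * (ρ * α)) (hg : γ = (f : ℂ) * (ρ * α)) (h : Ang β γ) : False := by
  have hnρ : normSq ρ = 1 := normSq_mu hρ
  have hns : normSq α ≠ 0 := normSq_eq_zero.not.mpr hα
  unfold Ang at h
  rw [← reconj] at h
  have h1 : conj β * γ = ((e * f * normSq α : ℝ) : ℂ) := by
    rw [hb, hg]
    calc conj ((e : ℂ) * (ρ * α)) * ((f : ℂ) * (ρ * α))
        = ((e : ℂ) * (f : ℂ)) * ((conj ρ * ρ) * (conj α * α)) := by
          simp only [map_mul, conj_ofReal]; ring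
    _ = ((e : ℂ) * (f : ℂ)) * (((normSq ρ : ℝ) : ℂ) * ((normSq α : ℝ) : ℂ)) := by
          rw [mul_comm (conj ρ) ρ, mul_comm (conj α) α, Complex.mul_conj, Complex.mul_conj]
    _ = ((e * f * normSq α : ℝ) : ℂ) := by rw [hnρ]; push_cast; ring
  rw [h1] at h
  simp only [Complex.ofReal_re] at h
  have habs : ‖β‖ * ‖γ‖ = |e * f * normSq α| := by
    rw [← Complex.norm_conj β, ← norm_mul, h1, Complex.norm_real, Real.norm_eq_abs]
  rw [habs] at h
  have : |e * f * normSq α| = 0 := by linarith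
  have h2 : e * f * normSq α ≠ 0 := by
    apply mul_ne_zero (mul_ne_zero he hf) hns
  exact h2 (abs_eq_zero.mp this)

lemma rank1_of_angles {α β γ : ℂ} (hα : α ≠ 0) (hβ : β ≠ 0) (hγ : γ ≠ 0)
    (h12 : Ang α β) (h13 : Ang α γ) (h23 : Ang β γ) :
    ∃ μ, (μ = om ∨ μ = conj om) ∧
      ∃ p q : ℝ, p ≠ 0 ∧ q ≠ 0 ∧ μ * β = (p : ℂ) * α ∧ μ ^ 2 * γ = (q : ℂ) * α := by
  obtain ⟨e, he, hb⟩ := ang_structure hα hβ h12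
  obtain ⟨f, hf, hg⟩ := ang_structure hα hγ h13
  rcases hb with hb | hb <;> rcases hg with hg | hg
  · exact absurd h23 (fun h => ang_same_rot hα (Or.inl rfl) he hf hb hg h)
  · -- β uses om, γ uses conj om ; take μ = conj om
    refine ⟨conj om, Or.inr rfl, e, f, he, hf, ?_, ?_⟩
    · rw [hb]
      calc conj om * ((e : ℂ) * (om * α)) = (e : ℂ) * ((om * conj om) * α) := by ring
      _ = (e : ℂ) * α := by rw [om_mul_omb, one_mul]
    · rw [omb_sq, hg]
      calc om * ((f : ℂ) * (conj om * α)) = (f : ℂ) * ((om * conj om) * α) := by ring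
      _ = (f : ℂ) * α := by rw [om_mul_omb, one_mul]
  · -- β uses conj om, γ uses om ; take μ = om
    refine ⟨om, Or.inl rfl, e, f, he, hf, ?_, ?_⟩
    · rw [hb]
      calc om * ((e : ℂ) * (conj om * α)) = (e : ℂ) * ((om * conj om) * α) := by ring
      _ = (e : ℂ) * α := by rw [om_mul_omb, one_mul]
    · rw [om_sq, hg]
      calc conj om * ((f : ℂ) * (om * α)) = (f : ℂ) * ((om * conj om) * α) := by ring
      _ = (f : ℂ) * α := by rw [om_mul_omb, one_mul]
  · exact absurd h23 (fun h => ang_same_rot hα (Or.inr rfl) he hf hb hg h)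

lemma beta_rot {μ α β : ℂ} (hμ : μ = om ∨ μ = conj om) {p : ℝ}
    (hβeq : μ * β = (p : ℂ) * α) : β = (p : ℂ) * (conj μ * α) := by
  calc β = (conj μ * μ) * β := by rw [mu_conj_mul hμ, one_mul]
  _ = conj μ * (μ * β) := by ring
  _ = conj μ * ((p : ℂ) * α) := by rw [hβeq]
  _ = (p : ℂ) * (conj μ * α) := by ring

lemma gamma_rot {μ α γ : ℂ} (hμ : μ = om ∨ μ = conj om) {q : ℝ}
    (hγeq : μ ^ 2 * γ = (q : ℂ) * α) : γ = (q : ℂ) * (conj (μ ^ 2) * α) := by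
  have h2 : μ ^ 2 = om ∨ μ ^ 2 = conj om := mu_sq_mem hμ
  calc γ = (conj (μ ^ 2) * μ ^ 2) * γ := by rw [mu_conj_mul h2, one_mul]
  _ = conj (μ ^ 2) * (μ ^ 2 * γ) := by ring
  _ = conj (μ ^ 2) * ((q : ℂ) * α) := by rw [hγeq]
  _ = (q : ℂ) * (conj (μ ^ 2) * α) := by ring

lemma conj_mu_re {μ : ℂ} (hμ : μ = om ∨ μ = conj om) : |(conj μ).re| = 1 / 2 := by
  rw [conj_re, mu_re hμ]
  norm_num

lemma conj_mu_abs {μ : ℂ} (hμ : μ = om ∨ μ = conj om) : ‖(conj μ)‖ = 1 := by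
  rw [Complex.norm_conj, mu_abs hμ]

lemma angles_of_rank1 {μ α β γ : ℂ} (hμ : μ = om ∨ μ = conj om)
    (hα : α ≠ 0) {p q : ℝ} (hp : p ≠ 0) (hq : q ≠ 0)
    (hβeq : μ * β = (p : ℂ) * α) (hγeq : μ ^ 2 * γ = (q : ℂ) * α) :
    Ang α β ∧ Ang α γ ∧ Ang β γ := by
  have hb := beta_rot hμ hβeq
  have hg := gamma_rot hμ hγeq
  have h2 : μ ^ 2 = om ∨ μ ^ 2 = conj om := mu_sq_mem hμ
  have hβ0 : β ≠ 0 := by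
    intro h0
    rw [h0] at hb
    have : (p : ℂ) * (conj μ * α) ≠ 0 :=
      mul_ne_zero (by exact_mod_cast hp)
        (mul_ne_zero (by simpa using mu_ne hμ) hα)
    exact this hb.symm
  refine ⟨ang_of_rot hα (conj_mu_re hμ) (conj_mu_abs hμ) p hb, ?_, ?_⟩
  · exact ang_of_rot hα (conj_mu_re h2) (conj_mu_abs h2) q hg
  · -- γ = (q/p) * (conj μ * β)
    have hgb : γ = ((q / p : ℝ) : ℂ) * (conj μ * β) := by
      have hp' : (p : ℂ) ≠ 0 := by exact_mod_cast hp
      rw [hb, hg, map_pow]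
      push_cast
      field_simp [hp']
    exact ang_of_rot hβ0 (conj_mu_re hμ) (conj_mu_abs hμ) (q / p) hgb

lemma k_of_concurrent {μ α β γ a₀ b₀ c₀ x : ℂ} {p q s t u : ℝ}
    (hrel : μ ^ 2 + μ + 1 = 0)
    (hβeq : μ * β = (p : ℂ) * α) (hγeq : μ ^ 2 * γ = (q : ℂ) * α)
    (hx1 : x = a₀ + (s : ℂ) * α) (hx2 : x = b₀ + (t : ℂ) * β) (hx3 : x = c₀ + (u : ℂ) * γ) :
    a₀ + μ * b₀ + μ ^ 2 * c₀ = ((-(s + t * p + u * q) : ℝ) : ℂ) * α := by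
  push_cast
  linear_combination (-1 : ℂ) * hx1 - μ * hx2 - μ ^ 2 * hx3 + x * hrel -
    (t : ℂ) * hβeq - (u : ℂ) * hγeq

lemma cross_rot {α β ζ : ℂ} {p : ℝ} (h : β = (p : ℂ) * (ζ * α)) :
    cross α β = p * ζ.im * normSq α := by
  rw [h]
  simp [cross, Complex.mul_re, Complex.mul_im, normSq_apply]
  ring

lemma cross_neg (z w : ℂ) : cross z (-w) = -cross z w := by
  simp [cross]; ring

lemma concurrent_of_rank1 {μ α β γ a₀ b₀ c₀ : ℂ} {p q r : ℝ}
    (hμ : μ = om ∨ μ = conj om) (hα : α ≠ 0) (hp : p ≠ 0) (hq : q ≠ 0)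
    (hβeq : μ * β = (p : ℂ) * α) (hγeq : μ ^ 2 * γ = (q : ℂ) * α)
    (hk : a₀ + μ * b₀ + μ ^ 2 * c₀ = (r : ℂ) * α) :
    ∃ x : ℂ, (∃ s : ℝ, x = a₀ + (s : ℂ) * α) ∧ (∃ t : ℝ, x = b₀ + (t : ℂ) * β) ∧
      (∃ u : ℝ, x = c₀ + (u : ℂ) * γ) := by
  have hrel := mu_rel hμ
  have hb := beta_rot hμ hβeq
  have hns : normSq α ≠ 0 := normSq_eq_zero.not.mpr hα
  have hcr : cross α β ≠ 0 := by
    rw [cross_rot hb]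
    have : (conj μ).im ≠ 0 := by
      rw [conj_im]
      simpa using mu_im_ne hμ
    exact mul_ne_zero (mul_ne_zero hp this) hns
  have hD : cross α (-β) ≠ 0 := by rw [cross_neg]; simpa using hcr
  set s := csol1 α (-β) (b₀ - a₀) with hs
  set t := csol2 α (-β) (b₀ - a₀) with ht
  have hspec := csol_spec hD (b₀ - a₀)
  rw [← hs, ← ht] at hspec
  set x := a₀ + (s : ℂ) * α with hx
  have hx1 : x = a₀ + (s : ℂ) * α := hx
  have hx2 : x = b₀ + (t : ℂ) * β := by
    rw [hx]; linear_combination hspec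
  have hμ2 : μ ^ 2 ≠ 0 := pow_ne_zero _ (mu_ne hμ)
  set u : ℝ := -(r + s + t * p) / q with hu
  have huq : u * q = -(r + s + t * p) := by rw [hu]; field_simp
  have hleft : μ ^ 2 * (x - c₀) = ((-(r + s + t * p) : ℝ) : ℂ) * α := by
    push_cast
    linear_combination (-1 : ℂ) * hx1 - μ * hx2 - hk - (t : ℂ) * hβeq + x * hrel
  have hright : μ ^ 2 * ((u : ℂ) * γ) = ((-(r + s + t * p) : ℝ) : ℂ) * α := by
    calc μ ^ 2 * ((u : ℂ) * γ) = (u : ℂ) * (μ ^ 2 * γ) := by ring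
    _ = (u : ℂ) * ((q : ℂ) * α) := by rw [hγeq]
    _ = ((u * q : ℝ) : ℂ) * α := by push_cast; ring
    _ = ((-(r + s + t * p) : ℝ) : ℂ) * α := by rw [huq]
  have : x - c₀ = (u : ℂ) * γ := mul_left_cancel₀ hμ2 (hleft.trans hright.symm)
  exact ⟨x, ⟨s, hx1⟩, ⟨t, hx2⟩, ⟨u, by linear_combination this⟩⟩
/-- a line in ℂ through p with direction v -/
def L (p v : ℂ) : Set ℂ := {z | ∃ s : ℝ, z = p + (s : ℂ) * v}

variable (a₀ α b₀ β c₀ γ : ℂ)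

/-- the set of unit equilateral triangles with vertices on the three lines -/
def Sc : Set (ℂ × ℂ × ℂ) :=
  {T | T.1 ∈ L a₀ α ∧ T.2.1 ∈ L b₀ β ∧ T.2.2 ∈ L c₀ γ ∧
    dist T.1 T.2.1 = 1 ∧ dist T.2.1 T.2.2 = 1 ∧ dist T.2.2 T.1 = 1}

/-- one orientation class -/
def Smu (μ : ℂ) : Set (ℂ × ℂ × ℂ) :=
  {T | T.1 ∈ L a₀ α ∧ T.2.1 ∈ L b₀ β ∧ T.2.2 ∈ L c₀ γ ∧
    dist T.1 T.2.1 = 1 ∧ T.1 + μ * T.2.1 + μ ^ 2 * T.2.2 = 0}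

variable {a₀ α b₀ β c₀ γ : ℂ}

lemma Sc_subset_union :
    Sc a₀ α b₀ β c₀ γ ⊆ Smu a₀ α b₀ β c₀ γ om ∪ Smu a₀ α b₀ β c₀ γ (conj om) := by
  rintro ⟨a, b, c⟩ ⟨h1, h2, h3, d1, d2, d3⟩
  rcases equilateral_classify d1 d2 d3 with h | h
  · exact Or.inl ⟨h1, h2, h3, d1, h⟩
  · exact Or.inr ⟨h1, h2, h3, d1, h⟩

lemma Smu_subset_Sc {μ : ℂ} (hμ : μ = om ∨ μ = conj om) :
    Smu a₀ α b₀ β c₀ γ μ ⊆ Sc a₀ α b₀ β c₀ γ := by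
  rintro ⟨a, b, c⟩ ⟨h1, h2, h3, d1, heq⟩
  obtain ⟨hd2, hd3⟩ := equilateral_of (mu_rel hμ) (mu_abs hμ) heq d1
  exact ⟨h1, h2, h3, d1, hd2, hd3⟩

/-- kernel lemma: under the non-all-parallel hypothesis, a kernel vector of the
linear system with vanishing first block is zero. -/
lemma ker_lemma {μ : ℂ} (hα : α ≠ 0) (hβ : β ≠ 0) (hγ : γ ≠ 0)
    (hnp : ¬(cross α β = 0 ∧ cross α γ = 0)) (hμ0 : μ ≠ 0) (hrel : μ ^ 2 + μ + 1 = 0)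
    {x y z : ℝ} (hk : (x : ℂ) * α + (y : ℂ) * (μ * β) + (z : ℂ) * (μ ^ 2 * γ) = 0)
    (hxy : (x : ℂ) * α - (y : ℂ) * β = 0) : x = 0 ∧ y = 0 ∧ z = 0 := by
  by_cases hy : y = 0
  · have hx : x = 0 := by
      rw [hy] at hxy
      push_cast at hxy
      simp at hxy
      rcases hxy with h | h
      · exact h
      · exact absurd h hα
    have hz : z = 0 := by
      rw [hx, hy] at hk
      push_cast at hk
      simp at hk
      rcases hk with h | h | h
      · exact h
      · exact absurd h hμ0
      · exact absurd h hγ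
    exact ⟨hx, hy, hz⟩
  · exfalso
    have hy' : (y : ℂ) ≠ 0 := by exact_mod_cast hy
    have hβα : β = ((x / y : ℝ) : ℂ) * α := by
      push_cast
      field_simp
      linear_combination -hxy
    have hx0 : x ≠ 0 := by
      intro h0
      rw [h0] at hβα
      simp at hβα
      exact hβ hβα
    -- derive y β = z γ  from the kernel equation:  x α (1+μ) = -z μ² γ  and x α = y β
    -- hk with hxy: y β + y μ β + z μ² γ = 0 (substituting xα = yβ)
    have hμ2 : μ ^ 2 ≠ 0 := pow_ne_zero _ hμ0
    have h3 : μ ^ 2 * ((z : ℂ) * γ - (y : ℂ) * β) = 0 := by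
      linear_combination hk - hxy - (y : ℂ) * β * hrel
    have h4 : (z : ℂ) * γ = (y : ℂ) * β := by
      have := mul_eq_zero.mp h3
      rcases this with h | h
      · exact absurd h hμ2
      · linear_combination h
    have hz0 : (z : ℂ) ≠ 0 := by
      intro h0
      rw [h0] at h4
      simp at h4
      rcases h4 with h | h
      · exact hy h
      · exact hβ h
    have h5 : (z : ℂ) * γ = (x : ℂ) * α := by linear_combination h4 - hxy
    have hγα : γ = ((x / z : ℝ) : ℂ) * α := by
      push_cast
      field_simp
      linear_combination h5
    exact hnp ⟨by rw [hβα]; exact cross_real_mul _ _, by rw [hγα]; exact cross_real_mul _ _⟩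

lemma Smu_finite_branch1 {μ : ℂ} (hα : α ≠ 0) (hβ : β ≠ 0) (hγ : γ ≠ 0)
    (hnp : ¬(cross α β = 0 ∧ cross α γ = 0)) (hμ0 : μ ≠ 0) (hrel : μ ^ 2 + μ + 1 = 0)
    (hD : cross α (μ * β) ≠ 0) : (Smu a₀ α b₀ β c₀ γ μ).Finite := by
  set k := a₀ + μ * b₀ + μ ^ 2 * c₀ with hk
  set σ₀ := csol1 α (μ * β) (-k) with hσ₀
  set τ₀ := csol2 α (μ * β) (-k) with hτ₀
  set σ₁ := csol1 α (μ * β) (-(μ ^ 2 * γ)) with hσ₁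
  set τ₁ := csol2 α (μ * β) (-(μ ^ 2 * γ)) with hτ₁
  have hker : (σ₁ : ℂ) * α + (τ₁ : ℂ) * (μ * β) + ((1 : ℝ) : ℂ) * (μ ^ 2 * γ) = 0 := by
    have := csol_spec hD (-(μ ^ 2 * γ))
    rw [← hσ₁, ← hτ₁] at this
    push_cast
    linear_combination this
  have hn : (σ₁ : ℂ) * α - (τ₁ : ℂ) * β ≠ 0 := by
    intro h0
    obtain ⟨-, -, hz⟩ := ker_lemma hα hβ hγ hnp hμ0 hrel hker h0
    norm_num at hz
  set n := (σ₁ : ℂ) * α - (τ₁ : ℂ) * β with hn'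
  set m := (a₀ - b₀) + (σ₀ : ℂ) * α - (τ₀ : ℂ) * β with hm
  refine Set.Finite.subset (Set.Finite.image
    (fun u : ℝ => ((a₀ + ((σ₀ + u * σ₁ : ℝ) : ℂ) * α, b₀ + ((τ₀ + u * τ₁ : ℝ) : ℂ) * β,
      c₀ + (u : ℂ) * γ) : ℂ × ℂ × ℂ)) (quad_finite (m := m) hn)) ?_
  rintro ⟨a, b, c⟩ ⟨⟨s, hs⟩, ⟨t, ht⟩, ⟨u, hu⟩, hd, heq⟩
  dsimp only at hs ht hu hd heq
  have hlin : (s : ℂ) * α + (t : ℂ) * (μ * β) = -k + (u : ℂ) * (-(μ ^ 2 * γ)) := by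
    rw [hs, ht, hu] at heq
    rw [hk]
    linear_combination heq
  obtain ⟨hs', ht'⟩ := csol_unique hD hlin
  rw [csol1_linear, ← hσ₀, ← hσ₁] at hs'
  rw [csol2_linear, ← hτ₀, ← hτ₁] at ht'
  have hab : a - b = m + (u : ℂ) * n := by
    rw [hs, ht, hs', ht', hm, hn']
    push_cast
    ring
  refine ⟨u, ?_, ?_⟩
  · have : ‖(a - b)‖ = 1 := by rw [← Complex.dist_eq]; exact hd
    rw [Set.mem_setOf_eq, ← hab, this]
  · rw [hs, ht, hu, hs', ht']

lemma Smu_finite_branch2 {μ : ℂ} (hα : α ≠ 0) (hβ : β ≠ 0) (hγ : γ ≠ 0)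
    (hnp : ¬(cross α β = 0 ∧ cross α γ = 0)) (hμ0 : μ ≠ 0) (hrel : μ ^ 2 + μ + 1 = 0)
    (hD : cross α (μ ^ 2 * γ) ≠ 0) : (Smu a₀ α b₀ β c₀ γ μ).Finite := by
  set k := a₀ + μ * b₀ + μ ^ 2 * c₀ with hk
  set σ₀ := csol1 α (μ ^ 2 * γ) (-k) with hσ₀
  set υ₀ := csol2 α (μ ^ 2 * γ) (-k) with hυ₀
  set σ₁ := csol1 α (μ ^ 2 * γ) (-(μ * β)) with hσ₁
  set υ₁ := csol2 α (μ ^ 2 * γ) (-(μ * β)) with hυ₁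
  have hker : (σ₁ : ℂ) * α + ((1 : ℝ) : ℂ) * (μ * β) + (υ₁ : ℂ) * (μ ^ 2 * γ) = 0 := by
    have := csol_spec hD (-(μ * β))
    rw [← hσ₁, ← hυ₁] at this
    push_cast
    linear_combination this
  have hn : (σ₁ : ℂ) * α - ((1 : ℝ) : ℂ) * β ≠ 0 := by
    intro h0
    obtain ⟨-, hy, -⟩ := ker_lemma hα hβ hγ hnp hμ0 hrel hker h0
    norm_num at hy
  set n := (σ₁ : ℂ) * α - ((1 : ℝ) : ℂ) * β with hn'
  set m := (a₀ - b₀) + (σ₀ : ℂ) * α with hm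
  refine Set.Finite.subset (Set.Finite.image
    (fun t : ℝ => ((a₀ + ((σ₀ + t * σ₁ : ℝ) : ℂ) * α, b₀ + (t : ℂ) * β,
      c₀ + ((υ₀ + t * υ₁ : ℝ) : ℂ) * γ) : ℂ × ℂ × ℂ)) (quad_finite (m := m) hn)) ?_
  rintro ⟨a, b, c⟩ ⟨⟨s, hs⟩, ⟨t, ht⟩, ⟨u, hu⟩, hd, heq⟩
  dsimp only at hs ht hu hd heq
  have hlin : (s : ℂ) * α + (u : ℂ) * (μ ^ 2 * γ) = -k + (t : ℂ) * (-(μ * β)) := by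
    rw [hs, ht, hu] at heq
    rw [hk]
    linear_combination heq
  obtain ⟨hs', hu'⟩ := csol_unique hD hlin
  rw [csol1_linear, ← hσ₀, ← hσ₁] at hs'
  rw [csol2_linear, ← hυ₀, ← hυ₁] at hu'
  have hab : a - b = m + (t : ℂ) * n := by
    rw [hs, ht, hs', hm, hn']
    push_cast
    ring
  refine ⟨t, ?_, ?_⟩
  · have : ‖(a - b)‖ = 1 := by rw [← Complex.dist_eq]; exact hd
    rw [Set.mem_setOf_eq, ← hab, this]
  · rw [hs, ht, hu, hs', hu']
lemma cross_ab_ne {μ : ℂ} (hμ : μ = om ∨ μ = conj om) (hα : α ≠ 0) {p : ℝ} (hp : p ≠ 0)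
    (hβeq : μ * β = (p : ℂ) * α) : cross α β ≠ 0 := by
  have hb := beta_rot hμ hβeq
  rw [cross_rot hb]
  have h1 : (conj μ).im ≠ 0 := by
    rw [conj_im]
    simpa using mu_im_ne hμ
  exact mul_ne_zero (mul_ne_zero hp h1) (normSq_eq_zero.not.mpr hα)

lemma Smu_infinite {μ : ℂ} (hμ : μ = om ∨ μ = conj om)
    (hα : α ≠ 0) (hβ : β ≠ 0) (hγ : γ ≠ 0) {p q r : ℝ} (hp : p ≠ 0) (hq : q ≠ 0)
    (hβeq : μ * β = (p : ℂ) * α) (hγeq : μ ^ 2 * γ = (q : ℂ) * α)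
    (hk : a₀ + μ * b₀ + μ ^ 2 * c₀ = (r : ℂ) * α) :
    (Sc a₀ α b₀ β c₀ γ).Infinite := by
  have hrel := mu_rel hμ
  have habs := mu_abs hμ
  have hcr : cross α β ≠ 0 := cross_ab_ne hμ hα hp hβeq
  have hD : cross α (-β) ≠ 0 := by rw [cross_neg]; simpa using hcr
  set s : ℝ → ℝ := fun x => csol1 α (-β) (circ x - (a₀ - b₀)) with hsdef
  set t : ℝ → ℝ := fun x => csol2 α (-β) (circ x - (a₀ - b₀)) with htdef
  set u : ℝ → ℝ := fun x => -(r + s x + t x * p) / q with hudef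
  set F : ℝ → ℂ × ℂ × ℂ :=
    fun x => (a₀ + ((s x : ℝ) : ℂ) * α, b₀ + ((t x : ℝ) : ℂ) * β, c₀ + ((u x : ℝ) : ℂ) * γ)
    with hFdef
  have hdiff : ∀ x : ℝ, (a₀ + ((s x : ℝ) : ℂ) * α) - (b₀ + ((t x : ℝ) : ℂ) * β) = circ x := by
    intro x
    have := csol_spec hD (circ x - (a₀ - b₀))
    linear_combination this
  have hmem : ∀ x : ℝ, F x ∈ Sc a₀ α b₀ β c₀ γ := by
    intro x
    have huq : u x * q = -(r + s x + t x * p) := by rw [hudef]; field_simp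
    have hd1 : dist (a₀ + ((s x : ℝ) : ℂ) * α) (b₀ + ((t x : ℝ) : ℂ) * β) = 1 := by
      rw [Complex.dist_eq, hdiff x, circ_abs]
    have heq : (a₀ + ((s x : ℝ) : ℂ) * α) + μ * (b₀ + ((t x : ℝ) : ℂ) * β) +
        μ ^ 2 * (c₀ + ((u x : ℝ) : ℂ) * γ) = 0 := by
      have h2 : ((u x : ℝ) : ℂ) * (q : ℂ) = -((r : ℂ) + (s x : ℂ) + (t x : ℂ) * (p : ℂ)) := by
        exact_mod_cast congrArg (fun y : ℝ => (y : ℂ)) huq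
      linear_combination hk + (t x : ℂ) * hβeq + (u x : ℂ) * hγeq + h2 * α
    obtain ⟨hd2, hd3⟩ := equilateral_of hrel habs heq hd1
    exact ⟨⟨s x, rfl⟩, ⟨t x, rfl⟩, ⟨u x, rfl⟩, hd1, hd2, hd3⟩
  have hinj : Function.Injective F := by
    intro x y hxy
    have h1 : (F x).1 = (F y).1 := by rw [hxy]
    have h2 : (F x).2.1 = (F y).2.1 := by rw [hxy]
    have : circ x = circ y := by
      rw [← hdiff x, ← hdiff y]
      simp only [hFdef] at h1 h2
      rw [h1, h2]
    exact circ_inj this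
  exact Set.infinite_of_injective_forall_mem hinj hmem

lemma Smu_finite_of_not_cond {μ : ℂ} (hμ : μ = om ∨ μ = conj om)
    (hα : α ≠ 0) (hβ : β ≠ 0) (hγ : γ ≠ 0)
    (hnp : ¬(cross α β = 0 ∧ cross α γ = 0))
    (hc : ¬((∃ z : ℂ, z ∈ L a₀ α ∧ z ∈ L b₀ β ∧ z ∈ L c₀ γ) ∧
      Ang α β ∧ Ang α γ ∧ Ang β γ)) :
    (Smu a₀ α b₀ β c₀ γ μ).Finite := by
  have hμ0 := mu_ne hμ
  have hrel := mu_rel hμ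
  by_cases hr1 : cross α (μ * β) = 0
  · by_cases hr2 : cross α (μ ^ 2 * γ) = 0
    · -- rank one
      obtain ⟨p, hβeq⟩ := cross_exists hα hr1
      obtain ⟨q, hγeq⟩ := cross_exists hα hr2
      have hp : p ≠ 0 := by
        intro h0
        rw [h0] at hβeq
        simp at hβeq
        rcases hβeq with h | h
        · exact hμ0 h
        · exact hβ h
      have hq : q ≠ 0 := by
        intro h0
        rw [h0] at hγeq
        simp at hγeq
        rcases hγeq with h | h
        · exact hμ0 h
        · exact hγ h
      by_cases hex : ∃ r : ℝ, a₀ + μ * b₀ + μ ^ 2 * c₀ = (r : ℂ) * α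
      · exfalso
        obtain ⟨r, hk⟩ := hex
        obtain ⟨h12, h13, h23⟩ := angles_of_rank1 hμ hα hp hq hβeq hγeq
        exact hc ⟨concurrent_of_rank1 hμ hα hp hq hβeq hγeq hk, h12, h13, h23⟩
      · -- the set is empty
        convert Set.finite_empty
        rw [Set.eq_empty_iff_forall_notMem]
        rintro ⟨a, b, c⟩ ⟨⟨s, hs⟩, ⟨t, ht⟩, ⟨u, hu⟩, hd, heq⟩
        dsimp only at hs ht hu hd heq
        rw [hs, ht, hu] at heq
        apply hex
        refine ⟨-(s + t * p + u * q), ?_⟩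
        push_cast
        linear_combination heq - (t : ℂ) * hβeq - (u : ℂ) * hγeq
    · exact Smu_finite_branch2 hα hβ hγ hnp hμ0 hrel hr2
  · exact Smu_finite_branch1 hα hβ hγ hnp hμ0 hrel hr1
theorem main_c (a₀ α b₀ β c₀ γ : ℂ) (hα : α ≠ 0) (hβ : β ≠ 0) (hγ : γ ≠ 0)
    (hnp : ¬(cross α β = 0 ∧ cross α γ = 0)) :
    Xor' ((∃ z : ℂ, z ∈ L a₀ α ∧ z ∈ L b₀ β ∧ z ∈ L c₀ γ) ∧
        Ang α β ∧ Ang α γ ∧ Ang β γ)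
      (Sc a₀ α b₀ β c₀ γ).Finite := by
  by_cases hc : (∃ z : ℂ, z ∈ L a₀ α ∧ z ∈ L b₀ β ∧ z ∈ L c₀ γ) ∧
      Ang α β ∧ Ang α γ ∧ Ang β γ
  · left
    refine ⟨hc, ?_⟩
    obtain ⟨⟨x, hx1, hx2, hx3⟩, h12, h13, h23⟩ := hc
    obtain ⟨μ, hμ, p, q, hp, hq, hβeq, hγeq⟩ := rank1_of_angles hα hβ hγ h12 h13 h23
    obtain ⟨s, hs⟩ := hx1
    obtain ⟨t, ht⟩ := hx2
    obtain ⟨u, hu⟩ := hx3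
    have hk := k_of_concurrent (mu_rel hμ) hβeq hγeq hs ht hu
    exact Smu_infinite hμ hα hβ hγ hp hq hβeq hγeq hk
  · right
    refine ⟨?_, hc⟩
    refine Set.Finite.subset (Set.Finite.union
      (Smu_finite_of_not_cond (Or.inl rfl) hα hβ hγ hnp hc)
      (Smu_finite_of_not_cond (Or.inr rfl) hα hβ hγ hnp hc)) Sc_subset_union
end
end Stmt7Aux

namespace Stmt7Aux

open Complex ComplexConjugate

noncomputable section

abbrev E2 := EuclideanSpace ℝ (Fin 2)

def φ : E2 ≃ₗᵢ[ℝ] ℂ := Complex.orthonormalBasisOneI.repr.symm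

lemma line_gen {q : AffineSubspace ℝ E2} (h : IsLine q) :
    ∃ p v : E2, p ∈ q ∧ v ≠ 0 ∧ q.direction = Submodule.span ℝ {v} ∧
      ∀ x : E2, x ∈ q ↔ ∃ s : ℝ, x = p + s • v := by
  obtain ⟨⟨p, hp⟩, hdim⟩ := h
  obtain ⟨v, hv0, hv⟩ := finrank_eq_one_iff'.mp hdim
  refine ⟨p, (v : E2), hp, by simpa using hv0, ?_, ?_⟩
  · apply le_antisymm
    · intro w hw
      obtain ⟨c, hc⟩ := hv ⟨w, hw⟩
      have : c • (v : E2) = w := congrArg Subtype.val hc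
      rw [← this]
      exact Submodule.smul_mem _ _ (Submodule.mem_span_singleton_self _)
    · rw [Submodule.span_le, Set.singleton_subset_iff]
      exact v.2
  · intro x
    rw [← AffineSubspace.vsub_right_mem_direction_iff_mem hp x]
    constructor
    · intro hx
      obtain ⟨c, hc⟩ := hv ⟨x -ᵥ p, hx⟩
      have hc' : c • (v : E2) = x - p := congrArg Subtype.val hc
      exact ⟨c, by rw [hc']; abel⟩
    · rintro ⟨s, rfl⟩
      have : (p + s • (v : E2)) -ᵥ p = s • (v : E2) := by
        simp [vsub_eq_sub]
      rw [this]
      exact Submodule.smul_mem _ _ v.2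

lemma phi_ne_zero {v : E2} (h : v ≠ 0) : φ v ≠ 0 := by
  simpa using (map_ne_zero_iff _ φ.injective).mpr h

lemma mem_L_iff {q : AffineSubspace ℝ E2} {p v : E2}
    (hmem : ∀ x : E2, x ∈ q ↔ ∃ s : ℝ, x = p + s • v) (x : E2) :
    x ∈ q ↔ φ x ∈ L (φ p) (φ v) := by
  rw [hmem]
  constructor
  · rintro ⟨s, rfl⟩
    exact ⟨s, by rw [map_add, LinearIsometryEquiv.map_smul, Complex.real_smul]⟩
  · rintro ⟨s, hs⟩
    refine ⟨s, φ.injective ?_⟩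
    rw [map_add, LinearIsometryEquiv.map_smul, Complex.real_smul]
    exact hs

lemma span_eq_iff_cross {v₁ v₂ : E2} (h1 : v₁ ≠ 0) (h2 : v₂ ≠ 0) :
    Submodule.span ℝ {v₁} = Submodule.span ℝ {v₂} ↔ cross (φ v₁) (φ v₂) = 0 := by
  constructor
  · intro h
    have : v₂ ∈ Submodule.span ℝ {v₁} := h ▸ Submodule.mem_span_singleton_self v₂
    obtain ⟨r, hr⟩ := Submodule.mem_span_singleton.mp this
    have : φ v₂ = (r : ℂ) * φ v₁ := by
      rw [← hr, LinearIsometryEquiv.map_smul, Complex.real_smul]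
    rw [this]
    exact cross_real_mul _ _
  · intro h
    obtain ⟨r, hr⟩ := cross_exists (phi_ne_zero h1) h
    have hv2 : v₂ = r • v₁ := φ.injective (by
      rw [hr, LinearIsometryEquiv.map_smul, Complex.real_smul])
    have hr0 : r ≠ 0 := by
      intro h0
      rw [h0, zero_smul] at hv2
      exact h2 hv2
    rw [hv2, Submodule.span_singleton_smul_eq (isUnit_iff_ne_zero.mpr hr0)]

lemma angleSixty_iff {q₁ q₂ : AffineSubspace ℝ E2} {v₁ v₂ : E2}
    (h1 : v₁ ≠ 0) (h2 : v₂ ≠ 0)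
    (hd1 : q₁.direction = Submodule.span ℝ {v₁})
    (hd2 : q₂.direction = Submodule.span ℝ {v₂}) :
    AngleSixty q₁ q₂ ↔ Ang (φ v₁) (φ v₂) := by
  have hinner : ∀ u v : E2, (inner ℝ u v : ℝ) = (conj (φ u) * φ v).re := fun u v =>
    (inner_map_complex φ u v).trans (by rw [mul_comm])
  have hnorm : ∀ u : E2, ‖u‖ = ‖(φ u)‖ := by
    intro u
    rw [← φ.norm_map u]
  constructor
  · intro h
    have := h v₁ (hd1 ▸ Submodule.mem_span_singleton_self v₁)
      v₂ (hd2 ▸ Submodule.mem_span_singleton_self v₂) h1 h2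
    unfold Ang
    rw [← reconj, ← hinner, ← hnorm, ← hnorm]
    exact this
  · intro h u hu v hv hu0 hv0
    rw [hd1, Submodule.mem_span_singleton] at hu
    rw [hd2, Submodule.mem_span_singleton] at hv
    obtain ⟨r, rfl⟩ := hu
    obtain ⟨r', rfl⟩ := hv
    unfold Ang at h
    rw [← reconj, ← hinner, ← hnorm, ← hnorm] at h
    rw [real_inner_smul_left, real_inner_smul_right, norm_smul, norm_smul]
    rw [abs_mul, abs_mul, Real.norm_eq_abs, Real.norm_eq_abs]
    rw [h]
    ring

end
end Stmt7Aux

namespace Stmt7Aux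
noncomputable section
end
end Stmt7Aux

open Stmt7Aux

theorem stmt7 (q₁ q₂ q₃ : AffineSubspace ℝ (EuclideanSpace ℝ (Fin 2)))
    (h₁ : IsLine q₁) (h₂ : IsLine q₂) (h₃ : IsLine q₃)
    (hnp : ¬(q₁.direction = q₂.direction ∧ q₁.direction = q₃.direction)) :
    Xor'
      ((∃ x : EuclideanSpace ℝ (Fin 2), x ∈ q₁ ∧ x ∈ q₂ ∧ x ∈ q₃) ∧
        AngleSixty q₁ q₂ ∧ AngleSixty q₁ q₃ ∧ AngleSixty q₂ q₃)
      ({t : EuclideanSpace ℝ (Fin 2) × EuclideanSpace ℝ (Fin 2) × EuclideanSpace ℝ (Fin 2) |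
          t.1 ∈ q₁ ∧ t.2.1 ∈ q₂ ∧ t.2.2 ∈ q₃ ∧
          dist t.1 t.2.1 = 1 ∧ dist t.2.1 t.2.2 = 1 ∧ dist t.2.2 t.1 = 1}.Finite) := by
  classical
  obtain ⟨p₁, v₁, hp₁, hv₁, hd₁, hm₁⟩ := line_gen h₁
  obtain ⟨p₂, v₂, hp₂, hv₂, hd₂, hm₂⟩ := line_gen h₂
  obtain ⟨p₃, v₃, hp₃, hv₃, hd₃, hm₃⟩ := line_gen h₃
  have hα := phi_ne_zero hv₁
  have hβ := phi_ne_zero hv₂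
  have hγ := phi_ne_zero hv₃
  have hnp' : ¬(cross (φ v₁) (φ v₂) = 0 ∧ cross (φ v₁) (φ v₃) = 0) := by
    rintro ⟨h12, h13⟩
    refine hnp ⟨?_, ?_⟩
    · rw [hd₁, hd₂]; exact (span_eq_iff_cross hv₁ hv₂).mpr h12
    · rw [hd₁, hd₃]; exact (span_eq_iff_cross hv₁ hv₃).mpr h13
  have hXor := main_c (φ p₁) (φ v₁) (φ p₂) (φ v₂) (φ p₃) (φ v₃) hα hβ hγ hnp'
  have hmem₁ := mem_L_iff hm₁
  have hmem₂ := mem_L_iff hm₂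
  have hmem₃ := mem_L_iff hm₃
  -- equivalence of the first condition
  have hA : ((∃ z : ℂ, z ∈ L (φ p₁) (φ v₁) ∧ z ∈ L (φ p₂) (φ v₂) ∧ z ∈ L (φ p₃) (φ v₃)) ∧
      Ang (φ v₁) (φ v₂) ∧ Ang (φ v₁) (φ v₃) ∧ Ang (φ v₂) (φ v₃)) ↔
      ((∃ x : EuclideanSpace ℝ (Fin 2), x ∈ q₁ ∧ x ∈ q₂ ∧ x ∈ q₃) ∧
        AngleSixty q₁ q₂ ∧ AngleSixty q₁ q₃ ∧ AngleSixty q₂ q₃) := by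
    constructor
    · rintro ⟨⟨z, hz1, hz2, hz3⟩, a12, a13, a23⟩
      refine ⟨⟨φ.symm z, ?_, ?_, ?_⟩, ?_, ?_, ?_⟩
      · exact (hmem₁ _).mpr (by rwa [φ.apply_symm_apply])
      · exact (hmem₂ _).mpr (by rwa [φ.apply_symm_apply])
      · exact (hmem₃ _).mpr (by rwa [φ.apply_symm_apply])
      · exact (angleSixty_iff hv₁ hv₂ hd₁ hd₂).mpr a12
      · exact (angleSixty_iff hv₁ hv₃ hd₁ hd₃).mpr a13
      · exact (angleSixty_iff hv₂ hv₃ hd₂ hd₃).mpr a23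
    · rintro ⟨⟨x, hx1, hx2, hx3⟩, a12, a13, a23⟩
      refine ⟨⟨φ x, (hmem₁ _).mp hx1, (hmem₂ _).mp hx2, (hmem₃ _).mp hx3⟩, ?_, ?_, ?_⟩
      · exact (angleSixty_iff hv₁ hv₂ hd₁ hd₂).mp a12
      · exact (angleSixty_iff hv₁ hv₃ hd₁ hd₃).mp a13
      · exact (angleSixty_iff hv₂ hv₃ hd₂ hd₃).mp a23
  -- equivalence of finiteness
  set Ψ : (EuclideanSpace ℝ (Fin 2) × EuclideanSpace ℝ (Fin 2) × EuclideanSpace ℝ (Fin 2)) →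
      ℂ × ℂ × ℂ := fun t => (φ t.1, φ t.2.1, φ t.2.2) with hΨ
  have hΨinj : Function.Injective Ψ := by
    rintro ⟨a, b, c⟩ ⟨a', b', c'⟩ h
    simp only [hΨ, Prod.mk.injEq] at h
    exact Prod.ext (φ.injective h.1) (Prod.ext (φ.injective h.2.1) (φ.injective h.2.2))
  have hΨsurj : Function.Surjective Ψ := by
    rintro ⟨a, b, c⟩
    exact ⟨(φ.symm a, φ.symm b, φ.symm c), by simp [hΨ]⟩
  have hT : {t : EuclideanSpace ℝ (Fin 2) × EuclideanSpace ℝ (Fin 2) × EuclideanSpace ℝ (Fin 2) |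
      t.1 ∈ q₁ ∧ t.2.1 ∈ q₂ ∧ t.2.2 ∈ q₃ ∧
      dist t.1 t.2.1 = 1 ∧ dist t.2.1 t.2.2 = 1 ∧ dist t.2.2 t.1 = 1} =
      Ψ ⁻¹' (Sc (φ p₁) (φ v₁) (φ p₂) (φ v₂) (φ p₃) (φ v₃)) := by
    ext ⟨a, b, c⟩
    simp only [Set.mem_setOf_eq, Set.mem_preimage, hΨ, Sc]
    rw [← hmem₁, ← hmem₂, ← hmem₃, φ.dist_map, φ.dist_map, φ.dist_map]
  have hB : (Sc (φ p₁) (φ v₁) (φ p₂) (φ v₂) (φ p₃) (φ v₃)).Finite ↔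
      {t : EuclideanSpace ℝ (Fin 2) × EuclideanSpace ℝ (Fin 2) × EuclideanSpace ℝ (Fin 2) |
      t.1 ∈ q₁ ∧ t.2.1 ∈ q₂ ∧ t.2.2 ∈ q₃ ∧
      dist t.1 t.2.1 = 1 ∧ dist t.2.1 t.2.2 = 1 ∧ dist t.2.2 t.1 = 1}.Finite := by
    rw [hT]
    constructor
    · intro h
      exact h.preimage (hΨinj.injOn)
    · intro h
      have := h.image Ψ
      rwa [Set.image_preimage_eq _ hΨsurj] at this
  rcases hXor with ⟨h1, h2⟩ | ⟨h1, h2⟩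
  · exact Or.inl ⟨hA.mp h1, fun hf => h2 (hB.mpr hf)⟩
  · exact Or.inr ⟨hB.mp h1, fun hcond => h2 (hA.mpr hcond)⟩
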